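/- Let ρ_{x^1}^k,...,ρ_{x^{N_D}}^k (k = 1..n_Q) be 2^m-dimensional density matrices, ξ ∈ ℝ, and define the kernel Σ(a,b) = c·Σ_{k=1}^{n_Q}(Tr(ρ_{x^a}^k ρ_{x^b}^k) − 2^{−m}) + ξ², where c = Tr(O²)/(2^{2m}−1) > 0. Then Σ is positive definite as an N_D×N_D matrix unless there exist real coefficients c_a, not all zero, with either (i) Σ_a c_a ρ_{x^a}^k = 0 for all k and Σ_a c_a = 0, or (ii) ξ = 0, Σ_a c_a ρ_{x^a}^k = I/2^m for all k and Σ_a c_a = 1. -/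

import Mathlib

open Matrix
open scoped ComplexOrder

lemma expand_sq_aux {n : Type*} [Fintype n] [DecidableEq n] (A : Matrix n n ℂ) (z : ℂ) :
    (A - z • 1) * (A - z • 1) = A * A - z • A - z • A + (z * z) • 1 := by
  simp only [Matrix.sub_mul, Matrix.mul_sub, Matrix.smul_mul, Matrix.mul_smul,
    Matrix.one_mul, Matrix.mul_one, smul_smul, smul_sub, sub_smul]
  abel

lemma trace_AhA_re_eq {n : Type*} [Fintype n] [DecidableEq n] (A : Matrix n n ℂ) :
    ((Aᴴ * A).trace).re = ∑ j, ∑ i, Complex.normSq (A i j) := by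
  have h : (Aᴴ * A).trace = ∑ j, ∑ i, (starRingEnd ℂ) (A i j) * A i j := by
    simp [Matrix.trace, Matrix.mul_apply, Matrix.conjTranspose_apply, Matrix.diag]
  rw [h]
  simp [Complex.re_sum, Complex.normSq_eq_conj_mul_self, Complex.normSq_apply]

lemma trace_AhA_re_nonneg {n : Type*} [Fintype n] [DecidableEq n] (A : Matrix n n ℂ) :
    0 ≤ ((Aᴴ * A).trace).re := by
  rw [trace_AhA_re_eq]
  exact Finset.sum_nonneg fun j _ => Finset.sum_nonneg fun i _ => Complex.normSq_nonneg _

lemma trace_AhA_re_zero {n : Type*} [Fintype n] [DecidableEq n] {A : Matrix n n ℂ}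
    (h : ((Aᴴ * A).trace).re = 0) : A = 0 := by
  rw [trace_AhA_re_eq] at h
  have h1 : ∀ j ∈ Finset.univ, ∑ i, Complex.normSq (A i j) = 0 := by
    rw [← Finset.sum_eq_zero_iff_of_nonneg
      (fun j _ => Finset.sum_nonneg fun i _ => Complex.normSq_nonneg _)]
    exact h
  ext i j
  have h2 := (Finset.sum_eq_zero_iff_of_nonneg
    (fun i _ => Complex.normSq_nonneg (A i j))).mp (h1 j (Finset.mem_univ j)) i (Finset.mem_univ i)
  simpa using Complex.normSq_eq_zero.mp h2

/-- Positive definiteness of the first-layer covariance of the quantum-classical hybrid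
network: with density matrices `ρ^k_{x^a}` on `ℂ^{2^m}`, constant `c > 0`, and
`Σ(a,b) = c Σ_k (Tr(ρ^k_{x^a} ρ^k_{x^b}) − 2^{−m}) + ξ²`, the matrix `Σ` is positive
definite unless there are coefficients `c_a`, not all zero, satisfying (i)
`Σ_a c_a ρ^k_{x^a} = 0` for all `k` and `Σ_a c_a = 0`, or (ii) `ξ = 0`,
`Σ_a c_a ρ^k_{x^a} = I/2^m` for all `k` and `Σ_a c_a = 1`. -/
theorem qcnn_first_layer_covariance_posDef (m nQ ND : ℕ) (ξ : ℝ) (c : ℝ) (hc : 0 < c)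
    (ρ : Fin nQ → Fin ND → Matrix (Fin (2 ^ m)) (Fin (2 ^ m)) ℂ)
    (hρ : ∀ k a, (ρ k a).PosSemidef) (hρtr : ∀ k a, (ρ k a).trace = 1)
    (Smat : Matrix (Fin ND) (Fin ND) ℝ)
    (hS : ∀ a b, Smat a b
      = c * ∑ k, (((ρ k a * ρ k b).trace).re - ((2 : ℝ) ^ m)⁻¹) + ξ ^ 2)
    (hno : ¬ ∃ co : Fin ND → ℝ, co ≠ 0 ∧
      (((∀ k, ∑ a, (co a : ℂ) • ρ k a = 0) ∧ ∑ a, co a = 0) ∨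
        (ξ = 0 ∧ (∀ k, ∑ a, (co a : ℂ) • ρ k a
            = ((2 : ℂ) ^ m)⁻¹ • (1 : Matrix (Fin (2 ^ m)) (Fin (2 ^ m)) ℂ))
          ∧ ∑ a, co a = 1))) :
    Smat.PosDef := by
  classical
  have h2m : ((2:ℝ)^m) ≠ 0 := by positivity
  have h2mC : ((2:ℂ)^m) ≠ 0 := by
    simp [pow_ne_zero]
  constructor
  · ext a b
    simp only [conjTranspose_apply, star_trivial, hS]
    congr 2
    exact Finset.sum_congr rfl fun k _ => by rw [Matrix.trace_mul_comm]
  · intro x hx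
    set s : ℝ := ∑ a, x a with hs
    set t : ℝ := s * ((2:ℝ)^m)⁻¹ with ht
    set M : Fin nQ → Matrix (Fin (2^m)) (Fin (2^m)) ℂ :=
      fun k => ∑ a, (x a : ℂ) • ρ k a with hM
    set N : Fin nQ → Matrix (Fin (2^m)) (Fin (2^m)) ℂ :=
      fun k => M k - (t:ℂ) • 1 with hN
    have htr1 : (1 : Matrix (Fin (2^m)) (Fin (2^m)) ℂ).trace = (((2:ℝ)^m : ℝ) : ℂ) := by
      rw [Matrix.trace_one]
      push_cast
      simp
    have htrM : ∀ k, (M k).trace = (s : ℂ) := by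
      intro k
      rw [hM]
      simp only [Matrix.trace_sum, Matrix.trace_smul, hρtr, smul_eq_mul, mul_one]
      rw [hs]
      push_cast
      rfl
    have hMMtr : ∀ k, (M k * M k).trace
        = ∑ a, ∑ b, ((x a : ℂ) * (x b : ℂ)) * (ρ k a * ρ k b).trace := by
      intro k
      rw [hM, Finset.sum_mul_sum]
      rw [Matrix.trace_sum]
      refine Finset.sum_congr rfl fun a _ => ?_
      rw [Matrix.trace_sum]
      refine Finset.sum_congr rfl fun b _ => ?_
      rw [Matrix.smul_mul, Matrix.mul_smul, smul_smul, Matrix.trace_smul, smul_eq_mul]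
    have hMh : ∀ k, (M k)ᴴ = M k := by
      intro k
      rw [hM]
      rw [Matrix.conjTranspose_sum]
      refine Finset.sum_congr rfl fun a _ => ?_
      rw [Matrix.conjTranspose_smul, (hρ k a).1.eq]
      congr 1
      simp [Complex.star_def, Complex.conj_ofReal]
    have hNh : ∀ k, (N k)ᴴ = N k := by
      intro k
      rw [hN]
      simp only [Matrix.conjTranspose_sub, Matrix.conjTranspose_smul, Matrix.conjTranspose_one,
        hMh k]
      congr 1
      simp [Complex.star_def, Complex.conj_ofReal]
    have hNtr : ∀ k, (((N k)ᴴ * N k).trace)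
        = (M k * M k).trace - ((s^2 * ((2:ℝ)^m)⁻¹ : ℝ) : ℂ) := by
      intro k
      rw [hNh k]
      have expand : N k * N k
          = M k * M k - (t:ℂ) • M k - (t:ℂ) • M k + ((t:ℂ)*(t:ℂ)) • 1 := by
        have hNk' : N k = M k - ((t:ℝ):ℂ) • 1 := rfl
        rw [hNk', expand_sq_aux]
      rw [expand]
      simp only [Matrix.trace_add, Matrix.trace_sub, Matrix.trace_smul, htrM, htr1, smul_eq_mul]
      rw [ht]
      push_cast
      field_simp
      ring
    have hkey : ∀ k, ∑ a, ∑ b, x a * x b * (((ρ k a * ρ k b).trace).re - ((2:ℝ)^m)⁻¹)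
        = (((N k)ᴴ * N k).trace).re := by
      intro k
      have h1 : ((M k * M k).trace).re
          = ∑ a, ∑ b, x a * x b * ((ρ k a * ρ k b).trace).re := by
        rw [hMMtr k, Complex.re_sum]
        refine Finset.sum_congr rfl fun a _ => ?_
        rw [Complex.re_sum]
        refine Finset.sum_congr rfl fun b _ => ?_
        rw [← Complex.ofReal_mul, Complex.re_ofReal_mul]
      have hsum2 : ∑ a, ∑ b, x a * x b = s^2 := by
        rw [hs, pow_two, Finset.sum_mul_sum]
      rw [hNtr k, Complex.sub_re, Complex.ofReal_re, h1, ← hsum2]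
      simp only [mul_sub, Finset.sum_sub_distrib, Finset.sum_mul]
    have hQ : star x ⬝ᵥ Smat.mulVec x
        = c * ∑ k, (((N k)ᴴ * N k).trace).re + ξ^2 * s^2 := by
      have e1 : star x ⬝ᵥ Smat.mulVec x
          = ∑ a, ∑ b, (∑ k, c * (x a * x b * (((ρ k a * ρ k b).trace).re - ((2:ℝ)^m)⁻¹))
            + ξ^2 * (x a * x b)) := by
        simp only [star_trivial, dotProduct, Matrix.mulVec]
        refine Finset.sum_congr rfl fun a _ => ?_
        rw [Finset.mul_sum]
        refine Finset.sum_congr rfl fun b _ => ?_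
        rw [hS a b,
          show ∑ k, c * (x a * x b * (((ρ k a * ρ k b).trace).re - ((2:ℝ)^m)⁻¹))
            = (c * (x a * x b)) * ∑ k, (((ρ k a * ρ k b).trace).re - ((2:ℝ)^m)⁻¹) from by
              rw [Finset.mul_sum]; exact Finset.sum_congr rfl fun k _ => by ring]
        ring
      rw [e1, Finset.sum_congr rfl fun a _ => Finset.sum_add_distrib, Finset.sum_add_distrib]
      congr 1
      · calc ∑ a, ∑ b, ∑ k, c * (x a * x b * (((ρ k a * ρ k b).trace).re - ((2:ℝ)^m)⁻¹))
            = ∑ a, ∑ k, ∑ b, c * (x a * x b * (((ρ k a * ρ k b).trace).re - ((2:ℝ)^m)⁻¹)) :=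
              Finset.sum_congr rfl fun a _ => Finset.sum_comm
          _ = ∑ k, ∑ a, ∑ b, c * (x a * x b * (((ρ k a * ρ k b).trace).re - ((2:ℝ)^m)⁻¹)) :=
              Finset.sum_comm
          _ = c * ∑ k, (((N k)ᴴ * N k).trace).re := by
              rw [Finset.mul_sum]
              refine Finset.sum_congr rfl fun k _ => ?_
              rw [← hkey k, Finset.mul_sum]
              exact Finset.sum_congr rfl fun a _ => by
                rw [Finset.mul_sum]
      · have e2 : ∑ a, ∑ b, ξ^2 * (x a * x b) = ξ^2 * ∑ a, ∑ b, x a * x b := by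
          simp [Finset.mul_sum]
        rw [e2]
        congr 1
        rw [hs, pow_two, Finset.sum_mul_sum]
    have hNnn : ∀ k, 0 ≤ (((N k)ᴴ * N k).trace).re := fun k => trace_AhA_re_nonneg _
    have hsum_nn : 0 ≤ ∑ k, (((N k)ᴴ * N k).trace).re := Finset.sum_nonneg fun k _ => hNnn k
    have hQnn : (0:ℝ) ≤ star x ⬝ᵥ Smat.mulVec x := by
      rw [hQ]
      have : 0 ≤ ξ^2 * s^2 := by positivity
      nlinarith
    rcases lt_or_eq_of_le hQnn with h | h
    · simpa [dotProduct, mulVec, Finsupp.sum_fintype, Finset.mul_sum, mul_assoc] using h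
    exfalso
    have h' : c * ∑ k, (((N k)ᴴ * N k).trace).re + ξ^2 * s^2 = 0 := by
      rw [← hQ]; exact h.symm
    have hCk : 0 ≤ c * ∑ k, (((N k)ᴴ * N k).trace).re := mul_nonneg hc.le hsum_nn
    have hD : (0:ℝ) ≤ ξ^2 * s^2 := by positivity
    have hB : ξ^2 * s^2 = 0 := by linarith
    have hA : ∑ k, (((N k)ᴴ * N k).trace).re = 0 := by
      have : c * ∑ k, (((N k)ᴴ * N k).trace).re = 0 := by linarith
      exact (mul_eq_zero.mp this).resolve_left (ne_of_gt hc)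
    have hNk : ∀ k, N k = 0 := fun k => trace_AhA_re_zero
      ((Finset.sum_eq_zero_iff_of_nonneg (fun k _ => hNnn k)).mp hA k (Finset.mem_univ k))
    have hMk : ∀ k, M k = (t:ℂ) • 1 := by
      intro k
      have h0 := hNk k
      rw [hN, sub_eq_zero] at h0
      exact h0
    by_cases hs0 : s = 0
    · apply hno
      refine ⟨x, (fun h0 => hx (Finsupp.coe_eq_zero.mp h0)), Or.inl ⟨fun k => ?_, ?_⟩⟩
      · have ht0 : t = 0 := by rw [ht, hs0, zero_mul]
        have h0 := hMk k
        rw [ht0] at h0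
        exact (show M k = ((0:ℝ):ℂ) • 1 from h0).trans (by simp)
      · rw [← hs]; exact hs0
    · have hξ : ξ = 0 := by
        rcases mul_eq_zero.mp hB with h1 | h1
        · exact pow_eq_zero_iff (two_ne_zero) |>.mp h1
        · exact absurd (pow_eq_zero_iff (two_ne_zero) |>.mp h1) hs0
      apply hno
      have hsC : (s:ℂ) ≠ 0 := Complex.ofReal_ne_zero.mpr hs0
      refine ⟨fun a => x a / s, ?_, Or.inr ⟨hξ, fun k => ?_, ?_⟩⟩
      · obtain ⟨a, ha⟩ := Function.ne_iff.mp (fun h0 => hx (Finsupp.coe_eq_zero.mp h0))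
        intro hco
        exact (div_ne_zero ha hs0) (congrFun hco a)
      · have e : ∑ a, ((x a / s : ℝ) : ℂ) • ρ k a = ((s:ℂ))⁻¹ • M k := by
          rw [hM, Finset.smul_sum]
          refine Finset.sum_congr rfl fun a _ => ?_
          rw [smul_smul]
          congr 1
          push_cast
          rw [div_eq_mul_inv, mul_comm]
        rw [e, hMk k, smul_smul]
        congr 1
        rw [ht]
        push_cast
        field_simp
      · rw [← Finset.sum_div, ← hs, div_self hs0]
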